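/- arXiv:0710.5594 — 2 statements merged into one kernel-verified Lean document; each statement's English description precedes it below -/
import Mathlib

section
/- In the example setting, the function Φ_e(λ) := b + cλ + ∫₋₁^ℓ (x e^{λx} − h(x)) f(x) dx is differentiable on ℝ with Φ_e′(λ) = c + ∫₋₁^ℓ x² e^{λx} f(x) dx ≥ δ for every λ ∈ ℝ, and consequently Φ_e has a unique zero λ_e ∈ ℝ; moreover |λ_e| ≤ |b₀|/δ and λ_e has the opposite sign to b₀ (with λ_e = 0 if b₀ = 0). -/
open MeasureTheory
open scoped Real

noncomputable section

/-- The truncation function `h(x) = x · 1_{|x| ≤ 1}` on `ℝ`. -/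
def trunc (x : ℝ) : ℝ := if |x| ≤ 1 then x else 0

/-- `Φ(λ, q) = b + cλ + ∫₋₁^ℓ (x ((q-1)λx + 1)^{1/(q-1)} - h(x)) f(x) dx`. -/
def Phi (b c ℓ : ℝ) (f : ℝ → ℝ) (lam q : ℝ) : ℝ :=
  b + c * lam +
    ∫ x in Set.Ioo (-1 : ℝ) ℓ, (x * ((q - 1) * lam * x + 1) ^ (1 / (q - 1)) - trunc x) * f x

/-- `Φ_e(λ) = b + cλ + ∫₋₁^ℓ (x e^{λx} - h(x)) f(x) dx`. -/
def PhiE (b c ℓ : ℝ) (f : ℝ → ℝ) (lam : ℝ) : ℝ :=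
  b + c * lam + ∫ x in Set.Ioo (-1 : ℝ) ℓ, (x * Real.exp (lam * x) - trunc x) * f x

/-- `γ₁(q) = -1/((q-1) max(1,ℓ))`. -/
def gam1 (ℓ q : ℝ) : ℝ := -(1 / ((q - 1) * max 1 ℓ))

/-- `γ₂(q) = 1/(q-1)`. -/
def gam2 (q : ℝ) : ℝ := 1 / (q - 1)

/-- `δ₁ = c + ∫₋₁⁰ x² f(x) dx`. -/
def del1 (c : ℝ) (f : ℝ → ℝ) : ℝ := c + ∫ x in Set.Ioo (-1 : ℝ) 0, x ^ 2 * f x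

/-- `δ₂ = c + ∫₀^ℓ x² f(x) dx`. -/
def del2 (c ℓ : ℝ) (f : ℝ → ℝ) : ℝ := c + ∫ x in Set.Ioo (0 : ℝ) ℓ, x ^ 2 * f x

/-- `δ = min(δ₁, δ₂)`. -/
def del (c ℓ : ℝ) (f : ℝ → ℝ) : ℝ := min (del1 c f) (del2 c ℓ f)

/-- `b₀ = b + ∫₋₁^ℓ (x - h(x)) f(x) dx`. -/
def bZero (b ℓ : ℝ) (f : ℝ → ℝ) : ℝ :=
  b + ∫ x in Set.Ioo (-1 : ℝ) ℓ, (x - trunc x) * f x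

/-- The hypotheses of the example setting: `d = 1`, `c ≥ 0`, `0 < ℓ < ∞`,
`f` a bounded measurable density vanishing outside `(-1, ℓ)`, and, if `c = 0`,
jumps of both positive and negative heights. -/
structure ExampleSetting (c ℓ : ℝ) (f : ℝ → ℝ) : Prop where
  hc : 0 ≤ c
  hl : 0 < ℓ
  hfmeas : Measurable f
  hfnonneg : ∀ x, 0 ≤ f x
  hfbdd : ∃ M : ℝ, ∀ x, f x ≤ M
  hsupp : ∀ x, x ∉ Set.Ioo (-1 : ℝ) ℓ → f x = 0
  hjumps : c = 0 →
    (0 < ∫ x in Set.Ioo (-1 : ℝ) 0, f x) ∧ (0 < ∫ x in Set.Ioo (0 : ℝ) ℓ, f x)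

namespace Stmt14Aux

lemma trunc_meas : Measurable trunc := by
  unfold trunc
  exact Measurable.ite (measurableSet_le measurable_norm measurable_const)
    measurable_id measurable_const

lemma abs_trunc_le (x : ℝ) : |trunc x| ≤ |x| := by
  unfold trunc; split <;> simp [abs_nonneg]

lemma integrableOn_of_bdd {g : ℝ → ℝ} {a b C : ℝ} (hg : Measurable g)
    (hbd : ∀ x ∈ Set.Ioo a b, |g x| ≤ C) : IntegrableOn g (Set.Ioo a b) := by
  apply Measure.integrableOn_of_bounded (M := C)
  · simp [Real.volume_Ioo]
  · exact hg.aestronglyMeasurable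
  · exact (ae_restrict_iff' measurableSet_Ioo).2 (ae_of_all _ hbd)

lemma abs_le_R {ℓ x : ℝ} (hx : x ∈ Set.Ioo (-1 : ℝ) ℓ) : |x| ≤ max 1 ℓ := by
  rcases hx with ⟨h1, h2⟩
  rw [abs_le]
  refine ⟨by nlinarith [le_max_left 1 ℓ], h2.le.trans (le_max_right 1 ℓ)⟩

lemma abs_le_max_of_Ioo {a b x : ℝ} (hx : x ∈ Set.Ioo a b) : |x| ≤ max |a| |b| := by
  rcases hx with ⟨h1, h2⟩
  rw [abs_le]
  constructor
  · calc -(max |a| |b|) ≤ -|a| := by simp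
      _ ≤ a := neg_abs_le a
      _ ≤ x := h1.le
  · calc x ≤ b := h2.le
      _ ≤ |b| := le_abs_self b
      _ ≤ max |a| |b| := le_max_right _ _

lemma split_int {ℓ : ℝ} (hl : 0 < ℓ) {g : ℝ → ℝ} (hg : IntegrableOn g (Set.Ioo (-1) ℓ)) :
    ∫ x in Set.Ioo (-1:ℝ) ℓ, g x
      = (∫ x in Set.Ioo (-1:ℝ) 0, g x) + ∫ x in Set.Ioo (0:ℝ) ℓ, g x := by
  have hu : Set.Ioo (-1:ℝ) 0 ∪ Set.Ico 0 ℓ = Set.Ioo (-1:ℝ) ℓ :=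
    Set.Ioo_union_Ico_eq_Ioo (by norm_num) hl.le
  have hdisj : Disjoint (Set.Ioo (-1:ℝ) 0) (Set.Ico 0 ℓ) := by
    rw [Set.disjoint_left]; rintro x ⟨_, h0⟩ ⟨h0', _⟩; linarith
  rw [← hu, setIntegral_union hdisj measurableSet_Ico
      (hg.mono_set (by rw [← hu]; exact Set.subset_union_left))
      (hg.mono_set (by rw [← hu]; exact Set.subset_union_right)),
    integral_Ico_eq_integral_Ioo]

lemma sq_int_pos {a b : ℝ} {f : ℝ → ℝ} (hf : Measurable f) (hfn : ∀ x, 0 ≤ f x)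
    {M : ℝ} (hM : ∀ x, f x ≤ M)
    (h : 0 < ∫ x in Set.Ioo a b, f x) : 0 < ∫ x in Set.Ioo a b, x ^ 2 * f x := by
  have hfi : IntegrableOn f (Set.Ioo a b) :=
    integrableOn_of_bdd hf fun x _ => by rw [abs_of_nonneg (hfn x)]; exact hM x
  have hgi : IntegrableOn (fun x => x ^ 2 * f x) (Set.Ioo a b) := by
    refine integrableOn_of_bdd ((measurable_id.pow_const 2).mul hf) (C := (max |a| |b|) ^ 2 * M)
      fun x hx => ?_
    rw [abs_of_nonneg (mul_nonneg (sq_nonneg x) (hfn x))]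
    have h1 : x ^ 2 ≤ (max |a| |b|) ^ 2 := by
      calc x ^ 2 = |x| ^ 2 := (sq_abs x).symm
        _ ≤ (max |a| |b|) ^ 2 := by gcongr; exact abs_le_max_of_Ioo hx
    nlinarith [sq_nonneg x, hfn x, hM x]
  have hsupp : 0 < volume (Function.support f ∩ Set.Ioo a b) := by
    rw [← setIntegral_pos_iff_support_of_nonneg_ae (ae_of_all _ hfn) hfi]
    exact h
  rw [setIntegral_pos_iff_support_of_nonneg_ae
      (ae_of_all _ fun x => mul_nonneg (sq_nonneg x) (hfn x)) hgi]
  have hseq : Function.support (fun x => x ^ 2 * f x) ∩ Set.Ioo a b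
      = (Function.support f ∩ Set.Ioo a b) \ {0} := by
    ext x
    simp only [Function.mem_support, Set.mem_inter_iff, Set.mem_diff, Set.mem_singleton_iff]
    constructor
    · rintro ⟨hx, hmem⟩
      exact ⟨⟨fun hf0 => hx (by simp [hf0]), hmem⟩, fun h0 => hx (by simp [h0])⟩
    · rintro ⟨⟨hfx, hmem⟩, h0⟩
      exact ⟨mul_ne_zero (pow_ne_zero 2 h0) hfx, hmem⟩
  rw [hseq, measure_diff_null (measure_singleton 0)]
  exact hsupp

lemma intF' (ℓ lam : ℝ) {f : ℝ → ℝ} {M : ℝ} (hf : Measurable f)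
    (hfn : ∀ x, 0 ≤ f x) (hM : ∀ x, f x ≤ M) :
    IntegrableOn (fun x => x ^ 2 * Real.exp (lam * x) * f x) (Set.Ioo (-1 : ℝ) ℓ) := by
  set R := max 1 ℓ with hR
  have hR0 : (0:ℝ) < R := lt_of_lt_of_le one_pos (le_max_left 1 ℓ)
  refine integrableOn_of_bdd
    (((measurable_id.pow_const 2).mul ((measurable_id.const_mul lam).exp)).mul hf)
    (C := R ^ 2 * Real.exp (|lam| * R) * M) fun x hx => ?_
  have hxR := abs_le_R hx
  have he : Real.exp (lam * x) ≤ Real.exp (|lam| * R) := by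
    apply Real.exp_le_exp.2
    calc lam * x ≤ |lam * x| := le_abs_self _
      _ = |lam| * |x| := abs_mul _ _
      _ ≤ |lam| * R := by gcongr
  rw [abs_of_nonneg (mul_nonneg (mul_nonneg (sq_nonneg x) (Real.exp_pos _).le) (hfn x))]
  have hx2 : x ^ 2 ≤ R ^ 2 := by
    calc x ^ 2 = |x| ^ 2 := (sq_abs x).symm
      _ ≤ R ^ 2 := by gcongr
  apply mul_le_mul _ (hM x) (hfn x) (by positivity)
  exact mul_le_mul hx2 he (Real.exp_pos _).le (by positivity)

lemma intsq {a b : ℝ} {f : ℝ → ℝ} {M : ℝ} (hf : Measurable f)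
    (hfn : ∀ x, 0 ≤ f x) (hM : ∀ x, f x ≤ M) :
    IntegrableOn (fun x => x ^ 2 * f x) (Set.Ioo a b) := by
  refine integrableOn_of_bdd ((measurable_id.pow_const 2).mul hf)
    (C := (max |a| |b|) ^ 2 * M) fun x hx => ?_
  rw [abs_of_nonneg (mul_nonneg (sq_nonneg x) (hfn x))]
  have h1 : x ^ 2 ≤ (max |a| |b|) ^ 2 := by
    calc x ^ 2 = |x| ^ 2 := (sq_abs x).symm
      _ ≤ (max |a| |b|) ^ 2 := by gcongr; exact abs_le_max_of_Ioo hx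
  nlinarith [sq_nonneg x, hfn x, hM x]

lemma phiE_hasDerivAt (b c ℓ : ℝ) {f : ℝ → ℝ} {M : ℝ} (hf : Measurable f)
    (hfn : ∀ x, 0 ≤ f x) (hM : ∀ x, f x ≤ M) (lam : ℝ) :
    HasDerivAt (PhiE b c ℓ f)
      (c + ∫ x in Set.Ioo (-1 : ℝ) ℓ, x ^ 2 * Real.exp (lam * x) * f x) lam := by
  set R := max 1 ℓ with hR
  have hR1 : (1:ℝ) ≤ R := le_max_left 1 ℓ
  have hR0 : (0:ℝ) < R := lt_of_lt_of_le one_pos hR1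
  set E : ℝ := Real.exp ((|lam| + 1) * R) with hE
  set μ := volume.restrict (Set.Ioo (-1 : ℝ) ℓ) with hμ
  have hexp : ∀ t ∈ Metric.ball lam 1, ∀ x ∈ Set.Ioo (-1:ℝ) ℓ, Real.exp (t * x) ≤ E := by
    intro t ht x hx
    rw [Metric.mem_ball, Real.dist_eq] at ht
    have hxR := abs_le_R hx
    have h1 : t * x ≤ (|lam| + 1) * R := by
      calc t * x ≤ |t * x| := le_abs_self _
        _ = |t| * |x| := abs_mul t x
        _ ≤ (|lam| + 1) * R := by
            apply mul_le_mul _ hxR (abs_nonneg x) (by positivity)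
            calc |t| = |lam + (t - lam)| := by ring_nf
              _ ≤ |lam| + |t - lam| := abs_add_le _ _
              _ ≤ |lam| + 1 := by linarith
    exact Real.exp_le_exp.2 h1
  have hI : HasDerivAt (fun t => ∫ x, (x * Real.exp (t * x) - trunc x) * f x ∂μ)
      (∫ x, x ^ 2 * Real.exp (lam * x) * f x ∂μ) lam := by
    have := hasDerivAt_integral_of_dominated_loc_of_deriv_le
      (F := fun t x => (x * Real.exp (t * x) - trunc x) * f x)
      (F' := fun t x => x ^ 2 * Real.exp (t * x) * f x)
      (μ := μ) (x₀ := lam) (bound := fun _ => R ^ 2 * E * M)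
      (s := Metric.ball lam 1) (Metric.ball_mem_nhds lam one_pos)
      (Filter.Eventually.of_forall fun t =>
        (((measurable_id.mul ((measurable_id.const_mul t).exp)).sub trunc_meas).mul
          hf).aestronglyMeasurable)
      ?_ (((measurable_id.pow_const 2).mul
          ((measurable_id.const_mul lam).exp)).mul hf).aestronglyMeasurable ?_ ?_ ?_
    · exact this.2
    · apply integrableOn_of_bdd
        (((measurable_id.mul ((measurable_id.const_mul lam).exp)).sub trunc_meas).mul hf)
        (C := (R * E + R) * M)
      intro x hx
      have hxR := abs_le_R hx
      have he : Real.exp (lam * x) ≤ E := hexp lam (Metric.mem_ball_self one_pos) x hx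
      have hfx := hfn x
      calc |(x * Real.exp (lam * x) - trunc x) * f x|
          = |x * Real.exp (lam * x) - trunc x| * f x := by
            rw [abs_mul, abs_of_nonneg hfx]
        _ ≤ (R * E + R) * M := by
            apply mul_le_mul _ (hM x) hfx (by positivity)
            calc |x * Real.exp (lam * x) - trunc x|
                ≤ |x * Real.exp (lam * x)| + |trunc x| := abs_sub _ _
              _ ≤ R * E + R := by
                  have := abs_trunc_le x
                  have h2 : |x * Real.exp (lam * x)| ≤ R * E := by
                    rw [abs_mul, abs_of_nonneg (Real.exp_pos _).le]
                    exact mul_le_mul hxR he (Real.exp_pos _).le hR0.le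
                  linarith [hxR.trans (le_refl R)]
    · rw [hμ]
      refine (ae_restrict_iff' measurableSet_Ioo).2 (ae_of_all _ fun x hx t ht => ?_)
      have hxR := abs_le_R hx
      have he := hexp t ht x hx
      rw [Real.norm_eq_abs, abs_of_nonneg
        (mul_nonneg (mul_nonneg (sq_nonneg x) (Real.exp_pos _).le) (hfn x))]
      have hx2 : x ^ 2 ≤ R ^ 2 := by
        calc x ^ 2 = |x| ^ 2 := (sq_abs x).symm
          _ ≤ R ^ 2 := by gcongr
      apply mul_le_mul _ (hM x) (hfn x) (by positivity)
      exact mul_le_mul hx2 he (Real.exp_pos _).le (by positivity)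
    · exact integrableOn_of_bdd measurable_const fun x _ => le_abs_self _
    · refine ae_of_all _ fun x t _ => ?_
      have h1 : HasDerivAt (fun t : ℝ => t * x) x t := hasDerivAt_mul_const x
      have h2 : HasDerivAt (fun t : ℝ => Real.exp (t * x)) (Real.exp (t * x) * x) t := h1.exp
      have h3 : HasDerivAt (fun t : ℝ => x * Real.exp (t * x) - trunc x)
          (x * (Real.exp (t * x) * x)) t := (h2.const_mul x).sub_const (trunc x)
      have h4 := h3.mul_const (f x)
      exact h4.congr_deriv (by ring)
  have hsum : HasDerivAt (fun t => b + c * t) c lam := by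
    simpa using (hasDerivAt_id lam).const_mul c |>.const_add b
  exact hsum.add hI

lemma deriv_ge (c ℓ : ℝ) {f : ℝ → ℝ} {M : ℝ} (hl : 0 < ℓ) (hf : Measurable f)
    (hfn : ∀ x, 0 ≤ f x) (hM : ∀ x, f x ≤ M) (lam : ℝ) :
    del c ℓ f ≤ c + ∫ x in Set.Ioo (-1 : ℝ) ℓ, x ^ 2 * Real.exp (lam * x) * f x := by
  have hint := intF' ℓ lam hf hfn hM
  rw [split_int hl hint]
  rcases le_total 0 lam with hlam | hlam
  · have h1 : (0:ℝ) ≤ ∫ x in Set.Ioo (-1:ℝ) 0, x ^ 2 * Real.exp (lam * x) * f x :=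
      setIntegral_nonneg measurableSet_Ioo fun x _ =>
        mul_nonneg (mul_nonneg (sq_nonneg x) (Real.exp_pos _).le) (hfn x)
    have h2 : (∫ x in Set.Ioo (0:ℝ) ℓ, x ^ 2 * f x)
        ≤ ∫ x in Set.Ioo (0:ℝ) ℓ, x ^ 2 * Real.exp (lam * x) * f x := by
      apply setIntegral_mono_on (intsq hf hfn hM)
        (hint.mono_set (fun x hx => ⟨by linarith [hx.1], hx.2⟩)) measurableSet_Ioo
      intro x hx
      have hone : (1:ℝ) ≤ Real.exp (lam * x) :=
        Real.one_le_exp (mul_nonneg hlam hx.1.le)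
      nlinarith [mul_nonneg (mul_nonneg (sq_nonneg x) (hfn x)) (sub_nonneg.2 hone)]
    calc del c ℓ f ≤ del2 c ℓ f := min_le_right _ _
      _ = c + ∫ x in Set.Ioo (0:ℝ) ℓ, x ^ 2 * f x := rfl
      _ ≤ c + ((∫ x in Set.Ioo (-1:ℝ) 0, x ^ 2 * Real.exp (lam * x) * f x)
            + ∫ x in Set.Ioo (0:ℝ) ℓ, x ^ 2 * Real.exp (lam * x) * f x) := by linarith
  · have h1 : (0:ℝ) ≤ ∫ x in Set.Ioo (0:ℝ) ℓ, x ^ 2 * Real.exp (lam * x) * f x :=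
      setIntegral_nonneg measurableSet_Ioo fun x _ =>
        mul_nonneg (mul_nonneg (sq_nonneg x) (Real.exp_pos _).le) (hfn x)
    have h2 : (∫ x in Set.Ioo (-1:ℝ) 0, x ^ 2 * f x)
        ≤ ∫ x in Set.Ioo (-1:ℝ) 0, x ^ 2 * Real.exp (lam * x) * f x := by
      apply setIntegral_mono_on (intsq hf hfn hM)
        (hint.mono_set (fun x hx => ⟨hx.1, by linarith [hx.2]⟩)) measurableSet_Ioo
      intro x hx
      have hone : (1:ℝ) ≤ Real.exp (lam * x) :=
        Real.one_le_exp (by nlinarith [hx.2.le] : (0:ℝ) ≤ lam * x)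
      nlinarith [mul_nonneg (mul_nonneg (sq_nonneg x) (hfn x)) (sub_nonneg.2 hone)]
    calc del c ℓ f ≤ del1 c f := min_le_left _ _
      _ = c + ∫ x in Set.Ioo (-1:ℝ) 0, x ^ 2 * f x := rfl
      _ ≤ c + ((∫ x in Set.Ioo (-1:ℝ) 0, x ^ 2 * Real.exp (lam * x) * f x)
            + ∫ x in Set.Ioo (0:ℝ) ℓ, x ^ 2 * Real.exp (lam * x) * f x) := by linarith

lemma del_pos {c ℓ : ℝ} {f : ℝ → ℝ} (hset : ExampleSetting c ℓ f) : 0 < del c ℓ f := by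
  obtain ⟨M, hM⟩ := hset.hfbdd
  have h1 : (0:ℝ) ≤ ∫ x in Set.Ioo (-1:ℝ) 0, x ^ 2 * f x :=
    setIntegral_nonneg measurableSet_Ioo fun x _ => mul_nonneg (sq_nonneg x) (hset.hfnonneg x)
  have h2 : (0:ℝ) ≤ ∫ x in Set.Ioo (0:ℝ) ℓ, x ^ 2 * f x :=
    setIntegral_nonneg measurableSet_Ioo fun x _ => mul_nonneg (sq_nonneg x) (hset.hfnonneg x)
  rcases eq_or_lt_of_le hset.hc with hc0 | hc0
  · obtain ⟨hj1, hj2⟩ := hset.hjumps hc0.symm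
    have p1 := sq_int_pos hset.hfmeas hset.hfnonneg hM hj1
    have p2 := sq_int_pos hset.hfmeas hset.hfnonneg hM hj2
    unfold del del1 del2
    rw [← hc0]
    simp only [zero_add]
    exact lt_min p1 p2
  · unfold del del1 del2
    exact lt_min (by linarith) (by linarith)

lemma phiE_zero (b c ℓ : ℝ) (f : ℝ → ℝ) : PhiE b c ℓ f 0 = bZero b ℓ f := by
  unfold PhiE bZero
  simp only [zero_mul, Real.exp_zero, mul_one, mul_zero, add_zero]

end Stmt14Aux

open Stmt14Aux in
/-- **Example, properties of `Φ_e`**: `Φ_e` is differentiable on `ℝ` with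
`Φ_e'(λ) = c + ∫₋₁^ℓ x² e^{λx} f(x) dx ≥ δ`, and it has a unique zero `λ_e`,
which satisfies `|λ_e| ≤ |b₀|/δ` and has the opposite sign to `b₀`. -/
theorem stmt14 (b c ℓ : ℝ) (f : ℝ → ℝ) (hset : ExampleSetting c ℓ f) :
    (∀ lam : ℝ,
      HasDerivAt (PhiE b c ℓ f)
        (c + ∫ x in Set.Ioo (-1 : ℝ) ℓ, x ^ 2 * Real.exp (lam * x) * f x) lam ∧
      del c ℓ f ≤ c + ∫ x in Set.Ioo (-1 : ℝ) ℓ, x ^ 2 * Real.exp (lam * x) * f x) ∧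
    ∃ lamE : ℝ, PhiE b c ℓ f lamE = 0 ∧ (∀ lam : ℝ, PhiE b c ℓ f lam = 0 → lam = lamE) ∧
      |lamE| ≤ |bZero b ℓ f| / del c ℓ f ∧
      (bZero b ℓ f < 0 → 0 < lamE) ∧ (0 < bZero b ℓ f → lamE < 0) ∧
      (bZero b ℓ f = 0 → lamE = 0) := by
  obtain ⟨M, hM⟩ := hset.hfbdd
  set Φ := PhiE b c ℓ f with hΦ
  set δ := del c ℓ f with hδ
  set b0 := bZero b ℓ f with hb0
  have hD : ∀ lam : ℝ, HasDerivAt Φ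
      (c + ∫ x in Set.Ioo (-1 : ℝ) ℓ, x ^ 2 * Real.exp (lam * x) * f x) lam :=
    fun lam => phiE_hasDerivAt b c ℓ hset.hfmeas hset.hfnonneg hM lam
  have hge : ∀ lam : ℝ,
      δ ≤ c + ∫ x in Set.Ioo (-1 : ℝ) ℓ, x ^ 2 * Real.exp (lam * x) * f x :=
    fun lam => deriv_ge c ℓ hset.hl hset.hfmeas hset.hfnonneg hM lam
  have hδpos : 0 < δ := del_pos hset
  have hmono : StrictMono Φ := by
    apply strictMono_of_deriv_pos
    intro x
    rw [(hD x).deriv]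
    exact lt_of_lt_of_le hδpos (hge x)
  have hΦ0 : Φ 0 = b0 := phiE_zero b c ℓ f
  -- the auxiliary function g = Φ - δ·id is monotone
  have hgD : ∀ x : ℝ, HasDerivAt (fun y => Φ y - δ * y)
      ((c + ∫ t in Set.Ioo (-1 : ℝ) ℓ, t ^ 2 * Real.exp (x * t) * f t) - δ) x := by
    intro x
    have := (hD x).sub ((hasDerivAt_id x).const_mul δ)
    exact this.congr_deriv (by simp)
  have hgmono : Monotone (fun y => Φ y - δ * y) := by
    apply monotone_of_deriv_nonneg (fun x => (hgD x).differentiableAt)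
    intro x
    rw [(hgD x).deriv]
    linarith [hge x]
  set r := |b0| / δ with hr
  have hrnn : 0 ≤ r := div_nonneg (abs_nonneg _) hδpos.le
  have hδr : δ * r = |b0| := by
    rw [hr, mul_div_cancel₀ _ hδpos.ne']
  have hΦr : 0 ≤ Φ r := by
    have := hgmono hrnn
    simp only [mul_zero, sub_zero] at this
    rw [hΦ0] at this
    have hb : b0 + |b0| ≥ 0 := by linarith [neg_abs_le b0]
    nlinarith [this, hδr]
  have hΦnr : Φ (-r) ≤ 0 := by
    have := hgmono (neg_nonpos_of_nonneg hrnn)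
    simp only [mul_zero, sub_zero] at this
    rw [hΦ0] at this
    have hb : b0 - |b0| ≤ 0 := sub_nonpos.2 (le_abs_self b0)
    nlinarith [this, hδr]
  have hcont : ContinuousOn Φ (Set.Icc (-r) r) :=
    fun x _ => (hD x).differentiableAt.continuousAt.continuousWithinAt
  have hiv := intermediate_value_Icc (neg_le_self hrnn) hcont
  have h0mem : (0:ℝ) ∈ Set.Icc (Φ (-r)) (Φ r) := ⟨hΦnr, hΦr⟩
  obtain ⟨lamE, hmem, hval⟩ := hiv h0mem
  refine ⟨fun lam => ⟨hD lam, hge lam⟩, lamE, hval, ?_, ?_, ?_, ?_, ?_⟩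
  · intro lam hlam
    exact hmono.injective (hlam.trans hval.symm)
  · exact abs_le.2 ⟨hmem.1, hmem.2⟩
  · intro hneg
    have : Φ 0 < Φ lamE := by rw [hΦ0, hval]; exact hneg
    exact hmono.lt_iff_lt.1 this
  · intro hpos
    have : Φ lamE < Φ 0 := by rw [hΦ0, hval]; exact hpos
    exact hmono.lt_iff_lt.1 this
  · intro h0
    have : Φ lamE = Φ 0 := by rw [hΦ0, hval, h0]
    exact hmono.injective this
end
end

section
/- In the example setting, let λ_e be the unique zero of Φ_e and, for q > 1 close enough to 1, let λ̃_q be the unique zero of Φ(·, q) in (γ₁(q), γ₂(q)). Then lim_{q ↓ 1} λ̃_q = λ_e. -/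
open MeasureTheory
open Filter Set
open scoped Real

noncomputable section

lemma measurable_trunc : Measurable trunc := by
  unfold trunc
  exact Measurable.ite (measurableSet_le (_root_.measurable_abs) measurable_const)
    measurable_id measurable_const

lemma abs_trunc_le (x : ℝ) : |trunc x| ≤ 1 := by
  unfold trunc; split_ifs with h
  · exact h
  · simp

lemma abs_le_L {ℓ x : ℝ} (hx : x ∈ Set.Ioo (-1 : ℝ) ℓ) : |x| ≤ max 1 ℓ := by
  rcases hx with ⟨h1, h2⟩
  rcases abs_cases x with ⟨he, _⟩ | ⟨he, _⟩
  · rw [he]; exact le_trans h2.le (le_max_right _ _)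
  · rw [he]; nlinarith [le_max_left (1:ℝ) ℓ]

/-- integrability of bounded measurable `g` times `f` on `Ioo (-1) ℓ`. -/
lemma integrableOn_mul_f {c ℓ : ℝ} {f : ℝ → ℝ} (hset : ExampleSetting c ℓ f)
    {g : ℝ → ℝ} (hg : Measurable g) {C : ℝ}
    (hC : ∀ x ∈ Set.Ioo (-1 : ℝ) ℓ, |g x| ≤ C) {s : Set ℝ}
    (hs : s ⊆ Set.Ioo (-1 : ℝ) ℓ) (hsm : MeasurableSet s) :
    IntegrableOn (fun x => g x * f x) s := by
  obtain ⟨M, hM⟩ := hset.hfbdd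
  have hfin : volume s < ⊤ :=
    lt_of_le_of_lt (measure_mono (hs.trans Set.Ioo_subset_Icc_self))
      (by simp [lt_top_iff_ne_top])
  haveI : Fact (volume s < ⊤) := ⟨hfin⟩
  refine Integrable.mono' (g := fun _ => C * M) (integrable_const _)
    ((hg.mul hset.hfmeas).aestronglyMeasurable) ?_
  rw [ae_restrict_iff' hsm]
  refine Filter.Eventually.of_forall fun x hx => ?_
  have hx' := hs hx
  have h1 : |g x| ≤ C := hC x hx'
  have h2 : 0 ≤ f x := hset.hfnonneg x
  have h3 : f x ≤ M := hM x
  have h0 : (0:ℝ) ≤ |g x| := abs_nonneg _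
  calc ‖g x * f x‖ = |g x| * f x := by rw [Real.norm_eq_abs, abs_mul, abs_of_nonneg h2]
  _ ≤ C * M := by nlinarith

/-- positivity of the base on the admissible interval -/
lemma base_pos {ℓ q lam x : ℝ} (hq : 1 < q)
    (hlam : lam ∈ Set.Ioo (gam1 ℓ q) (gam2 q)) (hx : x ∈ Set.Ioo (-1 : ℝ) ℓ) :
    0 < (q - 1) * lam * x + 1 := by
  have hs : 0 < q - 1 := by linarith
  have hL : (1:ℝ) ≤ max 1 ℓ := le_max_left _ _
  have hL0 : (0:ℝ) < max 1 ℓ := by linarith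
  rcases hlam with ⟨hg1, hg2⟩
  rcases hx with ⟨hx1, hx2⟩
  rcases le_or_gt 0 (lam * x) with h | h
  · nlinarith
  · have hinv : (1/(q-1)) * (q-1) = 1 := by field_simp
    rcases lt_trichotomy lam 0 with hl | hl | hl
    · -- lam < 0, so x > 0 and x < ℓ ≤ max 1 ℓ
      have hxpos : 0 < x := by nlinarith
      have hxL : x ≤ max 1 ℓ := le_trans hx2.le (le_max_right _ _)
      have h1 : lam * x ≥ lam * max 1 ℓ := by nlinarith
      have h3 : gam1 ℓ q * max 1 ℓ = -(1/(q-1)) := by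
        unfold gam1; field_simp
      have h2 : lam * max 1 ℓ > -(1/(q-1)) := by rw [← h3]; nlinarith
      nlinarith
    · simp [hl] at h
    · -- lam > 0, so x < 0, x > -1
      have hxneg : x < 0 := by nlinarith
      have h1 : lam * x > -lam := by nlinarith
      have h2 : (q-1) * lam < 1 := by
        have := hg2
        unfold gam2 at this
        nlinarith
      nlinarith
/-- `(1+su)^(1/s) ≤ e^u` for `s > 0`, base positive. -/
lemma rpow_le_exp' {s u : ℝ} (hs : 0 < s) (h : 0 < 1 + s * u) :
    (1 + s * u) ^ (1 / s) ≤ Real.exp u := by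
  rw [Real.rpow_def_of_pos h]
  rw [Real.exp_le_exp]
  have hlog : Real.log (1 + s * u) ≤ s * u := by
    have := Real.log_le_sub_one_of_pos h
    linarith
  calc Real.log (1 + s*u) * (1/s) ≤ (s*u) * (1/s) := by
        apply mul_le_mul_of_nonneg_right hlog
        positivity
  _ = u := by field_simp

/-- bound on the Phi-integrand -/
lemma phi_integrand_bound {ℓ q lam x : ℝ} (hq : 1 < q)
    (hpos : 0 < (q - 1) * lam * x + 1) (hx : x ∈ Set.Ioo (-1 : ℝ) ℓ) :
    |x * ((q - 1) * lam * x + 1) ^ (1 / (q - 1)) - trunc x|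
      ≤ max 1 ℓ * Real.exp (|lam| * max 1 ℓ) + 1 := by
  have hs : 0 < q - 1 := by linarith
  have hxL : |x| ≤ max 1 ℓ := abs_le_L hx
  have hb : ((q - 1) * lam * x + 1 : ℝ) = 1 + (q-1) * (lam * x) := by ring
  have h1 : ((q - 1) * lam * x + 1) ^ (1 / (q - 1)) ≤ Real.exp (lam * x) := by
    rw [hb]; rw [hb] at hpos; exact rpow_le_exp' hs hpos
  have h1' : (0:ℝ) ≤ ((q - 1) * lam * x + 1) ^ (1 / (q - 1)) :=
    Real.rpow_nonneg hpos.le _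
  have h2 : Real.exp (lam * x) ≤ Real.exp (|lam| * max 1 ℓ) := by
    apply Real.exp_le_exp.mpr
    calc lam * x ≤ |lam * x| := le_abs_self _
    _ = |lam| * |x| := abs_mul _ _
    _ ≤ |lam| * max 1 ℓ := by
        apply mul_le_mul_of_nonneg_left hxL (abs_nonneg _)
  have hL0 : (0:ℝ) < max 1 ℓ := lt_of_lt_of_le one_pos (le_max_left _ _)
  calc |x * ((q - 1) * lam * x + 1) ^ (1 / (q - 1)) - trunc x|
      ≤ |x * ((q - 1) * lam * x + 1) ^ (1 / (q - 1))| + |trunc x| := abs_sub _ _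
  _ ≤ max 1 ℓ * Real.exp (|lam| * max 1 ℓ) + 1 := by
      have : |x * ((q - 1) * lam * x + 1) ^ (1 / (q - 1))|
          ≤ max 1 ℓ * Real.exp (|lam| * max 1 ℓ) := by
        rw [abs_mul, abs_of_nonneg h1']
        have := Real.exp_pos (lam*x)
        nlinarith [abs_nonneg x]
      linarith [abs_trunc_le x]

/-- measurability of the Phi-integrand -/
lemma phi_integrand_meas (lam q : ℝ) :
    Measurable (fun x : ℝ => x * ((q - 1) * lam * x + 1) ^ (1 / (q - 1)) - trunc x) := by
  apply Measurable.sub _ measurable_trunc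
  apply measurable_id.mul
  exact (((measurable_id.const_mul ((q-1)*lam)).add_const 1).pow_const _)

/-- monotonicity of Phi in lam on the admissible interval -/
lemma phi_mono {b c ℓ : ℝ} {f : ℝ → ℝ} (hset : ExampleSetting c ℓ f) {q : ℝ} (hq : 1 < q)
    {lam₁ lam₂ : ℝ} (h1 : lam₁ ∈ Set.Ioo (gam1 ℓ q) (gam2 q))
    (h2 : lam₂ ∈ Set.Ioo (gam1 ℓ q) (gam2 q)) (hle : lam₁ ≤ lam₂) :
    Phi b c ℓ f lam₁ q ≤ Phi b c ℓ f lam₂ q := by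
  have hs : 0 < q - 1 := by linarith
  unfold Phi
  have key : ∀ x ∈ Set.Ioo (-1:ℝ) ℓ,
      (x * ((q - 1) * lam₁ * x + 1) ^ (1 / (q - 1)) - trunc x) * f x
      ≤ (x * ((q - 1) * lam₂ * x + 1) ^ (1 / (q - 1)) - trunc x) * f x := by
    intro x hx
    have hb1 := base_pos hq h1 hx
    have hb2 := base_pos hq h2 hx
    have hexp : (0:ℝ) ≤ 1 / (q-1) := by positivity
    have hmono : x * ((q - 1) * lam₁ * x + 1) ^ (1 / (q - 1))
        ≤ x * ((q - 1) * lam₂ * x + 1) ^ (1 / (q - 1)) := by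
      rcases le_or_gt 0 x with hx0 | hx0
      · have hbb : (q - 1) * lam₁ * x + 1 ≤ (q - 1) * lam₂ * x + 1 := by
          nlinarith [mul_nonneg (mul_nonneg (sub_nonneg.mpr hle) hx0) hs.le]
        exact mul_le_mul_of_nonneg_left (Real.rpow_le_rpow hb1.le hbb hexp) hx0
      · have hbb : (q - 1) * lam₂ * x + 1 ≤ (q - 1) * lam₁ * x + 1 := by
          nlinarith [mul_nonneg (mul_nonneg (sub_nonneg.mpr hle) (neg_nonneg.mpr hx0.le)) hs.le]
        have := Real.rpow_le_rpow hb2.le hbb hexp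
        nlinarith [this]
    have := hset.hfnonneg x
    nlinarith [hmono]
  have hC1 : ∀ x ∈ Set.Ioo (-1:ℝ) ℓ,
      |x * ((q - 1) * lam₁ * x + 1) ^ (1 / (q - 1)) - trunc x|
      ≤ max 1 ℓ * Real.exp (|lam₁| * max 1 ℓ) + 1 :=
    fun x hx => phi_integrand_bound hq (base_pos hq h1 hx) hx
  have hC2 : ∀ x ∈ Set.Ioo (-1:ℝ) ℓ,
      |x * ((q - 1) * lam₂ * x + 1) ^ (1 / (q - 1)) - trunc x|
      ≤ max 1 ℓ * Real.exp (|lam₂| * max 1 ℓ) + 1 :=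
    fun x hx => phi_integrand_bound hq (base_pos hq h2 hx) hx
  have hi1 := integrableOn_mul_f hset (phi_integrand_meas lam₁ q) hC1
    (subset_refl _) measurableSet_Ioo
  have hi2 := integrableOn_mul_f hset (phi_integrand_meas lam₂ q) hC2
    (subset_refl _) measurableSet_Ioo
  have := setIntegral_mono_on hi1 hi2 measurableSet_Ioo key
  linarith [mul_le_mul_of_nonneg_left hle hset.hc]

lemma phiE_integrand_meas (lam : ℝ) :
    Measurable (fun x : ℝ => x * Real.exp (lam * x) - trunc x) :=
  (measurable_id.mul ((measurable_id.const_mul lam).exp)).sub measurable_trunc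

lemma phiE_integrand_bound {ℓ lam x : ℝ} (hx : x ∈ Set.Ioo (-1 : ℝ) ℓ) :
    |x * Real.exp (lam * x) - trunc x| ≤ max 1 ℓ * Real.exp (|lam| * max 1 ℓ) + 1 := by
  have hxL : |x| ≤ max 1 ℓ := abs_le_L hx
  have h2 : Real.exp (lam * x) ≤ Real.exp (|lam| * max 1 ℓ) := by
    apply Real.exp_le_exp.mpr
    calc lam * x ≤ |lam * x| := le_abs_self _
    _ = |lam| * |x| := abs_mul _ _
    _ ≤ |lam| * max 1 ℓ := mul_le_mul_of_nonneg_left hxL (abs_nonneg _)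
  calc |x * Real.exp (lam * x) - trunc x|
      ≤ |x * Real.exp (lam * x)| + |trunc x| := abs_sub _ _
  _ ≤ max 1 ℓ * Real.exp (|lam| * max 1 ℓ) + 1 := by
      have h3 : |x * Real.exp (lam * x)| ≤ max 1 ℓ * Real.exp (|lam| * max 1 ℓ) := by
        rw [abs_mul, abs_of_nonneg (Real.exp_pos _).le]
        have := (Real.exp_pos (lam*x)).le
        nlinarith [abs_nonneg x]
      linarith [abs_trunc_le x]

lemma phiE_integrableOn {c ℓ : ℝ} {f : ℝ → ℝ} (hset : ExampleSetting c ℓ f) (lam : ℝ) :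
    IntegrableOn (fun x => (x * Real.exp (lam * x) - trunc x) * f x) (Set.Ioo (-1:ℝ) ℓ) :=
  integrableOn_mul_f hset (phiE_integrand_meas lam)
    (fun x hx => phiE_integrand_bound hx) (subset_refl _) measurableSet_Ioo

/-- strict monotonicity of PhiE -/
lemma phiE_strictMono {b c ℓ : ℝ} {f : ℝ → ℝ} (hset : ExampleSetting c ℓ f) :
    StrictMono (PhiE b c ℓ f) := by
  intro lam₁ lam₂ hlt
  have hi1 := phiE_integrableOn hset lam₁
  have hi2 := phiE_integrableOn hset lam₂
  -- the difference of the integrals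
  have hdiff : (∫ x in Set.Ioo (-1:ℝ) ℓ, (x * Real.exp (lam₂ * x) - trunc x) * f x)
      - (∫ x in Set.Ioo (-1:ℝ) ℓ, (x * Real.exp (lam₁ * x) - trunc x) * f x)
      = ∫ x in Set.Ioo (-1:ℝ) ℓ, x * (Real.exp (lam₂ * x) - Real.exp (lam₁ * x)) * f x := by
    rw [← integral_sub hi2 hi1]
    apply setIntegral_congr_fun measurableSet_Ioo
    intro x hx
    ring
  -- pointwise nonnegativity of the new integrand
  have hptnn : ∀ x : ℝ, 0 ≤ x * (Real.exp (lam₂ * x) - Real.exp (lam₁ * x)) := by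
    intro x
    rcases le_or_gt 0 x with hx0 | hx0
    · have : Real.exp (lam₁ * x) ≤ Real.exp (lam₂ * x) := by
        apply Real.exp_le_exp.mpr; nlinarith
      nlinarith
    · have : Real.exp (lam₂ * x) ≤ Real.exp (lam₁ * x) := by
        apply Real.exp_le_exp.mpr; nlinarith
      nlinarith
  have hnn : ∀ x : ℝ, 0 ≤ x * (Real.exp (lam₂ * x) - Real.exp (lam₁ * x)) * f x :=
    fun x => mul_nonneg (hptnn x) (hset.hfnonneg x)
  have hint_nn : 0 ≤ ∫ x in Set.Ioo (-1:ℝ) ℓ, x * (Real.exp (lam₂ * x) - Real.exp (lam₁ * x)) * f x :=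
    setIntegral_nonneg measurableSet_Ioo fun x _ => hnn x
  rcases lt_or_eq_of_le hset.hc with hc0 | hc0
  · unfold PhiE
    have : c * lam₁ < c * lam₂ := by nlinarith
    linarith [hdiff, hint_nn]
  · -- c = 0 case: show the integral is strictly positive
    have hczero : c = 0 := hc0.symm
    obtain ⟨hneg, _⟩ := hset.hjumps hczero
    set g : ℝ → ℝ := fun x => x * (Real.exp (lam₂ * x) - Real.exp (lam₁ * x)) * f x with hg
    have hgmeas : Measurable g := by
      apply Measurable.mul _ hset.hfmeas
      exact measurable_id.mul (((measurable_id.const_mul lam₂).exp).sub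
        ((measurable_id.const_mul lam₁).exp))
    have hbound : ∀ x ∈ Set.Ioo (-1:ℝ) ℓ,
        |x * (Real.exp (lam₂ * x) - Real.exp (lam₁ * x))|
        ≤ max 1 ℓ * (Real.exp (|lam₂| * max 1 ℓ) + Real.exp (|lam₁| * max 1 ℓ)) := by
      intro x hx
      have hxL : |x| ≤ max 1 ℓ := abs_le_L hx
      have e2 : Real.exp (lam₂ * x) ≤ Real.exp (|lam₂| * max 1 ℓ) := by
        apply Real.exp_le_exp.mpr
        calc lam₂ * x ≤ |lam₂ * x| := le_abs_self _
        _ = |lam₂| * |x| := abs_mul _ _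
        _ ≤ |lam₂| * max 1 ℓ := mul_le_mul_of_nonneg_left hxL (abs_nonneg _)
      have e1 : Real.exp (lam₁ * x) ≤ Real.exp (|lam₁| * max 1 ℓ) := by
        apply Real.exp_le_exp.mpr
        calc lam₁ * x ≤ |lam₁ * x| := le_abs_self _
        _ = |lam₁| * |x| := abs_mul _ _
        _ ≤ |lam₁| * max 1 ℓ := mul_le_mul_of_nonneg_left hxL (abs_nonneg _)
      rw [abs_mul]
      have h4 : |Real.exp (lam₂ * x) - Real.exp (lam₁ * x)|
          ≤ Real.exp (|lam₂| * max 1 ℓ) + Real.exp (|lam₁| * max 1 ℓ) := by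
        rw [abs_sub_comm] at *
        have := abs_sub (Real.exp (lam₂*x)) (Real.exp (lam₁*x))
        rw [abs_of_nonneg (Real.exp_pos _).le, abs_of_nonneg (Real.exp_pos _).le] at this
        linarith [abs_sub_comm (Real.exp (lam₂*x)) (Real.exp (lam₁*x))]
      have hLpos : (0:ℝ) < max 1 ℓ := lt_of_lt_of_le one_pos (le_max_left _ _)
      nlinarith [abs_nonneg x, abs_nonneg (Real.exp (lam₂ * x) - Real.exp (lam₁ * x)),
        (Real.exp_pos (|lam₂| * max 1 ℓ)).le, (Real.exp_pos (|lam₁| * max 1 ℓ)).le]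
    have hIoo_sub : Set.Ioo (-1:ℝ) 0 ⊆ Set.Ioo (-1:ℝ) ℓ :=
      Set.Ioo_subset_Ioo le_rfl hset.hl.le
    have hgi : IntegrableOn g (Set.Ioo (-1:ℝ) ℓ) := by
      rw [hg]
      exact integrableOn_mul_f hset (by fun_prop) hbound (subset_refl _) measurableSet_Ioo
    -- integral over the big set ≥ integral over Ioo(-1,0)
    have hmono_set : (∫ x in Set.Ioo (-1:ℝ) 0, g x) ≤ ∫ x in Set.Ioo (-1:ℝ) ℓ, g x := by
      apply setIntegral_mono_set hgi
      · exact Filter.Eventually.of_forall fun x => hnn x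
      · exact HasSubset.Subset.eventuallyLE hIoo_sub
    -- positivity on Ioo(-1,0)
    have hgi0 : IntegrableOn g (Set.Ioo (-1:ℝ) 0) := hgi.mono_set hIoo_sub
    have hfi0 : IntegrableOn f (Set.Ioo (-1:ℝ) 0) := by
      have : IntegrableOn (fun x => (1:ℝ) * f x) (Set.Ioo (-1:ℝ) 0) :=
        integrableOn_mul_f hset measurable_const (C := 1) (by intro x _; simp)
          hIoo_sub (measurableSet_Ioo)
      simpa using this
    have hsupf : 0 < volume (Function.support f ∩ Set.Ioo (-1:ℝ) 0) := by
      rw [← setIntegral_pos_iff_support_of_nonneg_ae _ hfi0]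
      · exact hneg
      · exact Filter.Eventually.of_forall fun x => hset.hfnonneg x
    have hsupsub : Function.support f ∩ Set.Ioo (-1:ℝ) 0
        ⊆ Function.support g ∩ Set.Ioo (-1:ℝ) 0 := by
      rintro x ⟨hfx, hx⟩
      refine ⟨?_, hx⟩
      simp only [Function.mem_support, hg] at *
      have hxneg : x < 0 := hx.2
      have hpt : 0 < x * (Real.exp (lam₂ * x) - Real.exp (lam₁ * x)) := by
        have : Real.exp (lam₂ * x) < Real.exp (lam₁ * x) := by
          apply Real.exp_lt_exp.mpr; nlinarith
        nlinarith
      exact mul_ne_zero (ne_of_gt hpt) hfx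
    have hposg : 0 < ∫ x in Set.Ioo (-1:ℝ) 0, g x := by
      rw [setIntegral_pos_iff_support_of_nonneg_ae
        (Filter.Eventually.of_forall fun x => hnn x) hgi0]
      exact lt_of_lt_of_le hsupf (measure_mono hsupsub)
    unfold PhiE
    rw [hczero]
    have : (0:ℝ) < ∫ x in Set.Ioo (-1:ℝ) ℓ, g x := lt_of_lt_of_le hposg hmono_set
    simp only [hg] at this hdiff
    linarith [hdiff]

lemma sub_one_tendsto : Tendsto (fun q : ℝ => q - 1) (nhdsWithin 1 (Set.Ioi 1))
    (nhdsWithin 0 (Set.Ioi 0)) := by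
  apply tendsto_nhdsWithin_of_tendsto_nhds_of_eventually_within
  · have : Tendsto (fun q : ℝ => q - 1) (nhds 1) (nhds (1 - 1)) :=
      (continuous_id.sub continuous_const).tendsto 1
    simpa using this.mono_left nhdsWithin_le_nhds
  · apply eventually_nhdsWithin_of_forall
    intro x hx
    simp only [Set.mem_Ioi] at *
    linarith

/-- pointwise limit of the power towards the exponential -/
lemma pow_tendsto_exp (u : ℝ) :
    Tendsto (fun q : ℝ => (1 + (q - 1) * u) ^ (1 / (q - 1)))
      (nhdsWithin 1 (Set.Ioi 1)) (nhds (Real.exp u)) := by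
  have hinv : Tendsto (fun q : ℝ => (q - 1)⁻¹) (nhdsWithin 1 (Set.Ioi 1)) atTop :=
    tendsto_inv_nhdsGT_zero.comp sub_one_tendsto
  have hcomp := (Real.tendsto_one_add_div_rpow_exp u).comp hinv
  apply hcomp.congr'
  apply eventually_nhdsWithin_of_forall
  intro q hq
  simp only [Set.mem_Ioi] at hq
  have hne : q - 1 ≠ 0 := by intro h; rw [sub_eq_zero] at h; simp [h] at hq
  show (1 + u / (q - 1)⁻¹) ^ (q - 1)⁻¹ = _
  have h1 : u / (q - 1)⁻¹ = (q - 1) * u := by field_simp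
  show _ = (1 + (q - 1) * u) ^ (1 / (q - 1))
  rw [h1, one_div]

/-- convergence of Phi to PhiE as q → 1⁺, for fixed lam -/
lemma phi_tendsto {b c ℓ : ℝ} {f : ℝ → ℝ} (hset : ExampleSetting c ℓ f) (lam : ℝ) :
    Tendsto (fun q => Phi b c ℓ f lam q) (nhdsWithin 1 (Set.Ioi 1))
      (nhds (PhiE b c ℓ f lam)) := by
  obtain ⟨M, hM⟩ := hset.hfbdd
  set L := max 1 ℓ with hL
  have hL1 : (1:ℝ) ≤ L := le_max_left _ _
  have hL0 : (0:ℝ) < L := by linarith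
  set M' := max M 0 with hM'
  have hfM' : ∀ x, f x ≤ M' := fun x => le_trans (hM x) (le_max_left _ _)
  set C := (L * Real.exp (|lam| * L) + 1) * M' with hC
  -- finite measure on the restricted set
  have hfin : volume (Set.Ioo (-1:ℝ) ℓ) < ⊤ := by simp [lt_top_iff_ne_top]
  haveI : Fact (volume (Set.Ioo (-1:ℝ) ℓ) < ⊤) := ⟨hfin⟩
  -- the threshold for base positivity
  set t : ℝ := 1 + 1 / (|lam| * L + 1) with ht
  have htpos : 1 < t := by
    have hh : (0:ℝ) < 1 / (|lam| * L + 1) := by positivity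
    rw [ht]; linarith
  have hbasepos : ∀ q ∈ Set.Ioo (1:ℝ) t, ∀ x ∈ Set.Ioo (-1:ℝ) ℓ,
      0 < (q - 1) * lam * x + 1 := by
    intro q hq x hx
    have hs : 0 < q - 1 := by have := hq.1; linarith
    have hxL : |x| ≤ L := abs_le_L hx
    have h1 : |(q - 1) * lam * x| ≤ (q - 1) * (|lam| * L) := by
      rw [abs_mul, abs_mul, abs_of_pos hs, mul_assoc]
      exact mul_le_mul_of_nonneg_left
        (mul_le_mul_of_nonneg_left hxL (abs_nonneg lam)) hs.le
    have h2 : (q - 1) * (|lam| * L + 1) < 1 := by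
      have hq2 : q < t := hq.2
      rw [ht] at hq2
      have hpos : (0:ℝ) < |lam| * L + 1 := by positivity
      have hq3 : q - 1 < 1 / (|lam| * L + 1) := by linarith
      calc (q - 1) * (|lam| * L + 1) < (1 / (|lam| * L + 1)) * (|lam| * L + 1) := by
            nlinarith
      _ = 1 := by field_simp
    have h3 : (q - 1) * lam * x ≥ -((q-1) * (|lam| * L)) := by
      have := neg_abs_le ((q - 1) * lam * x)
      linarith
    nlinarith
  -- main convergence of the integral part via dominated convergence
  have hint : Tendsto
      (fun q => ∫ x in Set.Ioo (-1:ℝ) ℓ,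
        (x * ((q - 1) * lam * x + 1) ^ (1 / (q - 1)) - trunc x) * f x)
      (nhdsWithin 1 (Set.Ioi 1))
      (nhds (∫ x in Set.Ioo (-1:ℝ) ℓ, (x * Real.exp (lam * x) - trunc x) * f x)) := by
    apply tendsto_integral_filter_of_dominated_convergence (fun _ => C)
    · apply Filter.Eventually.of_forall
      intro q
      exact ((phi_integrand_meas lam q).mul hset.hfmeas).aestronglyMeasurable
    · have hmem : Set.Ioo (1:ℝ) t ∈ nhdsWithin 1 (Set.Ioi 1) :=
        Ioo_mem_nhdsGT_of_mem (Set.mem_Ico.mpr ⟨le_refl _, htpos⟩)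
      filter_upwards [hmem] with q hq
      rw [ae_restrict_iff' measurableSet_Ioo]
      apply Filter.Eventually.of_forall
      intro x hx
      have hb := hbasepos q hq x hx
      have hgb := phi_integrand_bound (hq.1) hb hx
      have hf0 := hset.hfnonneg x
      have hfb := hfM' x
      rw [Real.norm_eq_abs, abs_mul, abs_of_nonneg hf0]
      show _ ≤ (L * Real.exp (|lam| * L) + 1) * M'
      have hgb2 : |x * ((q - 1) * lam * x + 1) ^ (1 / (q - 1)) - trunc x|
          ≤ L * Real.exp (|lam| * L) + 1 := hgb
      have h0 : (0:ℝ) ≤ |x * ((q - 1) * lam * x + 1) ^ (1 / (q - 1)) - trunc x| := abs_nonneg _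
      have hE : (0:ℝ) < Real.exp (|lam| * L) := Real.exp_pos _
      nlinarith [hgb2, hL0, hL1]
    · exact integrable_const _
    · apply Filter.Eventually.of_forall
      intro x
      have hB : Tendsto (fun q : ℝ => ((q - 1) * lam * x + 1) ^ (1 / (q - 1)))
          (nhdsWithin 1 (Set.Ioi 1)) (nhds (Real.exp (lam * x))) := by
        have := pow_tendsto_exp (lam * x)
        apply this.congr
        intro q
        ring_nf
      have : Tendsto (fun q : ℝ =>
          (x * ((q - 1) * lam * x + 1) ^ (1 / (q - 1)) - trunc x) * f x)
          (nhdsWithin 1 (Set.Ioi 1))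
          (nhds ((x * Real.exp (lam * x) - trunc x) * f x)) :=
        (((hB.const_mul x).sub tendsto_const_nhds).mul_const (f x))
      exact this
  have : Tendsto (fun q => b + c * lam +
      ∫ x in Set.Ioo (-1:ℝ) ℓ,
        (x * ((q - 1) * lam * x + 1) ^ (1 / (q - 1)) - trunc x) * f x)
      (nhdsWithin 1 (Set.Ioi 1)) (nhds (PhiE b c ℓ f lam)) := by
    unfold PhiE
    exact tendsto_const_nhds.add hint
  exact this

/-- **Example, convergence of the Girsanov parameters**: if `λ_e` is the unique zero
of `Φ_e` and, for `q ∈ (1, q₀)`, `λ̃_q` is the unique zero of `Φ(·, q)` in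
`(γ₁(q), γ₂(q))`, then `λ̃_q → λ_e` as `q ↓ 1`. -/
theorem stmt16 (b c ℓ : ℝ) (f : ℝ → ℝ) (hset : ExampleSetting c ℓ f)
    (lamE : ℝ) (hlamE : PhiE b c ℓ f lamE = 0)
    (hlamEuniq : ∀ lam : ℝ, PhiE b c ℓ f lam = 0 → lam = lamE)
    (q₀ : ℝ) (hq₀ : 1 < q₀) (lamq : ℝ → ℝ)
    (hlamq : ∀ q : ℝ, 1 < q → q < q₀ →
      lamq q ∈ Set.Ioo (gam1 ℓ q) (gam2 q) ∧ Phi b c ℓ f (lamq q) q = 0 ∧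
      ∀ lam ∈ Set.Ioo (gam1 ℓ q) (gam2 q), Phi b c ℓ f lam q = 0 → lam = lamq q) :
    Filter.Tendsto lamq (nhdsWithin 1 (Set.Ioi 1)) (nhds lamE) := by
  rw [Metric.tendsto_nhds]
  intro ε hε
  have hplus : 0 < PhiE b c ℓ f (lamE + ε) := by
    have := phiE_strictMono (b := b) hset (show lamE < lamE + ε by linarith)
    rwa [hlamE] at this
  have hminus : PhiE b c ℓ f (lamE - ε) < 0 := by
    have := phiE_strictMono (b := b) hset (show lamE - ε < lamE by linarith)
    rwa [hlamE] at this
  have hev1 : ∀ᶠ q in nhdsWithin 1 (Set.Ioi 1), 0 < Phi b c ℓ f (lamE + ε) q :=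
    (phi_tendsto hset (lamE + ε)).eventually (eventually_gt_nhds hplus)
  have hev2 : ∀ᶠ q in nhdsWithin 1 (Set.Ioi 1), Phi b c ℓ f (lamE - ε) q < 0 :=
    (phi_tendsto hset (lamE - ε)).eventually (eventually_lt_nhds hminus)
  set L := max 1 ℓ with hLdef
  have hL1 : (1:ℝ) ≤ L := le_max_left _ _
  have hL0 : (0:ℝ) < L := by linarith
  set R := |lamE| + ε with hRdef
  have hR0 : (0:ℝ) < R := by have := abs_nonneg lamE; linarith
  set t : ℝ := 1 + 1 / (L * (R + 1)) with htdef
  have ht1 : 1 < t := by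
    have : (0:ℝ) < 1 / (L * (R + 1)) := by positivity
    rw [htdef]; linarith
  have hmint : 1 < min t q₀ := lt_min ht1 hq₀
  have hev3 : ∀ᶠ q in nhdsWithin 1 (Set.Ioi 1), q ∈ Set.Ioo 1 (min t q₀) :=
    Ioo_mem_nhdsGT_of_mem (Set.mem_Ico.mpr ⟨le_refl _, hmint⟩)
  filter_upwards [hev1, hev2, hev3] with q h1 h2 h3
  have hq1 : 1 < q := h3.1
  have hqt : q < t := lt_of_lt_of_le h3.2 (min_le_left _ _)
  have hq0 : q < q₀ := lt_of_lt_of_le h3.2 (min_le_right _ _)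
  have hs : 0 < q - 1 := by linarith
  have ha : (q - 1) * (L * (R + 1)) < 1 := by
    have hpos : (0:ℝ) < L * (R + 1) := by positivity
    have hq3 : q - 1 < 1 / (L * (R + 1)) := by
      have h' : q < 1 + 1 / (L * (R + 1)) := hqt
      linarith
    calc (q - 1) * (L * (R + 1)) < (1 / (L * (R + 1))) * (L * (R + 1)) :=
      mul_lt_mul_of_pos_right hq3 hpos
    _ = 1 := by field_simp
  have hmem : ∀ u : ℝ, -R ≤ u → u ≤ R → u ∈ Set.Ioo (gam1 ℓ q) (gam2 q) := by
    intro u hu1 hu2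
    constructor
    · show gam1 ℓ q < u
      unfold gam1
      have hpos : (0:ℝ) < (q - 1) * L := by positivity
      have hRlt : R < 1 / ((q - 1) * L) := by
        rw [lt_div_iff₀ hpos]
        nlinarith
      have : -u ≤ R := by linarith
      have : -u < 1 / ((q - 1) * L) := lt_of_le_of_lt this hRlt
      linarith
    · show u < gam2 q
      unfold gam2
      rw [lt_div_iff₀ hs]
      nlinarith [mul_le_mul_of_nonneg_right hu2 hs.le,
        mul_nonneg (mul_nonneg hs.le (sub_nonneg.mpr hL1)) (by linarith : (0:ℝ) ≤ R + 1)]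
  have hmemp : lamE + ε ∈ Set.Ioo (gam1 ℓ q) (gam2 q) := by
    apply hmem
    · have := neg_abs_le lamE; linarith
    · have := le_abs_self lamE; linarith
  have hmemm : lamE - ε ∈ Set.Ioo (gam1 ℓ q) (gam2 q) := by
    apply hmem
    · have := neg_abs_le lamE; linarith
    · have := le_abs_self lamE; linarith
  obtain ⟨hmemq, hzero, _⟩ := hlamq q hq1 hq0
  have hlow : lamE - ε < lamq q := by
    by_contra h
    push_neg at h
    have := phi_mono (b := b) hset hq1 hmemq hmemm h
    rw [hzero] at this
    linarith
  have hhigh : lamq q < lamE + ε := by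
    by_contra h
    push_neg at h
    have := phi_mono (b := b) hset hq1 hmemp hmemq h
    rw [hzero] at this
    linarith
  rw [Real.dist_eq]
  rw [abs_lt]
  constructor <;> linarith
end
end
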